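/- For γ₁, γ₂ ∈ SL₂(ℤ) with γ₃ = γ₁γ₂, the Rademacher symbol satisfies Φ(γ₁γ₂) = Φ(γ₁) + Φ(γ₂) - 3·sgn(c₁c₂c₃), where cⱼ denotes the lower-left entry of γⱼ and sgn(0) = 0. -/

import Mathlib

open Finset

/-- The sawtooth function ((x)). -/
noncomputable def saw (x : ℝ) : ℝ := if Int.fract x = 0 then 0 else Int.fract x - 1/2

/-- The Dedekind sum s(h,k). -/
noncomputable def dedekindSum (h k : ℤ) : ℝ :=
  ∑ μ ∈ Finset.Icc 1 k, saw ((h : ℝ) * μ / k) * saw ((μ : ℝ) / k)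

/-- The Rademacher symbol Φ. -/
noncomputable def Rad (γ : Matrix (Fin 2) (Fin 2) ℤ) : ℝ :=
  if γ 1 0 = 0 then (γ 0 1 : ℝ) / (γ 1 1 : ℝ)
  else ((γ 0 0 : ℝ) + (γ 1 1 : ℝ)) / (γ 1 0 : ℝ)
    - 12 * ((γ 1 0).sign : ℝ) * dedekindSum (γ 1 1) |γ 1 0|

lemma saw_add_int (x : ℝ) (n : ℤ) : saw (x + n) = saw x := by
  unfold saw; rw [Int.fract_add_intCast]

lemma saw_neg (x : ℝ) : saw (-x) = - saw x := by
  unfold saw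
  by_cases hx : Int.fract x = 0
  · rw [hx, Int.fract_neg_eq_zero.mpr hx]; simp
  · rw [if_neg (fun h0 => hx (Int.fract_neg_eq_zero.mp h0)), if_neg hx, Int.fract_neg hx]; ring

lemma saw_int (n : ℤ) : saw (n : ℝ) = 0 := by
  unfold saw; rw [Int.fract_intCast]; simp

lemma saw_zero : saw 0 = 0 := by simpa using saw_int 0

lemma saw_one : saw 1 = 0 := by simpa using saw_int 1

/-- A helper: Icc with insert at the top. -/
lemma Icc_succ_top {a b : ℤ} (h : a ≤ b + 1) : Finset.Icc a (b+1) = insert (b+1) (Finset.Icc a b) := by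
  ext x; simp only [Finset.mem_Icc, Finset.mem_insert]; omega

lemma sum_Icc_id : ∀ n : ℤ, 0 ≤ n → 2 * (∑ μ ∈ Finset.Icc (1:ℤ) n, μ) = n * (n+1) := by
  refine Int.le_induction ?_ ?_
  · simp
  · intro n hn ih
    rw [Icc_succ_top (by omega), Finset.sum_insert (by simp)]
    ring_nf
    ring_nf at ih
    linarith

lemma sum_Icc_sq : ∀ n : ℤ, 0 ≤ n → 6 * (∑ μ ∈ Finset.Icc (1:ℤ) n, μ^2) = n * (n+1) * (2*n+1) := by
  refine Int.le_induction ?_ ?_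
  · simp
  · intro n hn ih
    rw [Icc_succ_top (by omega), Finset.sum_insert (by simp)]
    ring_nf
    ring_nf at ih
    linarith

lemma not_dvd_of_mem {h k μ : ℤ} (hk : 0 < k) (hco : IsCoprime h k)
    (hμ : μ ∈ Finset.Icc (1:ℤ) (k-1)) : ¬ (k ∣ h * μ) := by
  rw [Finset.mem_Icc] at hμ
  intro hdvd
  have : k ∣ μ := (hco.symm.dvd_of_dvd_mul_left hdvd)
  have := Int.le_of_dvd (by omega) this
  omega

lemma emod_mem {h k μ : ℤ} (hk : 0 < k) (hco : IsCoprime h k)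
    (hμ : μ ∈ Finset.Icc (1:ℤ) (k-1)) : h * μ % k ∈ Finset.Icc (1:ℤ) (k-1) := by
  have h1 : 0 ≤ h * μ % k := Int.emod_nonneg _ (by omega)
  have h2 : h * μ % k < k := Int.emod_lt_of_pos _ hk
  have h3 : h * μ % k ≠ 0 := by
    intro h0
    exact not_dvd_of_mem hk hco hμ (Int.dvd_of_emod_eq_zero h0)
  rw [Finset.mem_Icc]; omega

lemma sum_emod_bij (h k : ℤ) (hk : 0 < k) (hco : IsCoprime h k) (f : ℤ → ℤ) :
    ∑ μ ∈ Finset.Icc (1:ℤ) (k-1), f (h * μ % k) = ∑ μ ∈ Finset.Icc (1:ℤ) (k-1), f μ := by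
  obtain ⟨u, v, huv⟩ := hco
  have hcu : IsCoprime u k := ⟨h, v, by linarith [huv]⟩
  have hco' : IsCoprime h k := ⟨u, v, huv⟩
  refine Finset.sum_nbij' (fun μ => h * μ % k) (fun ν => u * ν % k) ?_ ?_ ?_ ?_ ?_
  · intro a ha; exact emod_mem hk hco' ha
  · intro a ha; exact emod_mem hk hcu ha
  · intro a ha
    rw [Finset.mem_Icc] at ha
    calc u * (h * a % k) % k = u * (h * a) % k := by
          rw [Int.mul_emod, Int.emod_emod_of_dvd _ dvd_rfl, ← Int.mul_emod]
      _ = a % k := by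
          have : u * (h * a) = a + (-(v * a)) * k := by linear_combination a * huv
          rw [this, Int.add_mul_emod_self_right]
      _ = a := Int.emod_eq_of_lt (by omega) (by omega)
  · intro a ha
    rw [Finset.mem_Icc] at ha
    calc h * (u * a % k) % k = h * (u * a) % k := by
          rw [Int.mul_emod, Int.emod_emod_of_dvd _ dvd_rfl, ← Int.mul_emod]
      _ = a % k := by
          have : h * (u * a) = a + (-(v * a)) * k := by linear_combination a * huv
          rw [this, Int.add_mul_emod_self_right]
      _ = a := Int.emod_eq_of_lt (by omega) (by omega)
  · intro a ha; rfl

/-- splitting an interval sum -/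
lemma sum_Icc_split (f : ℤ → ℤ) (m n : ℤ) (h0 : 0 ≤ m) (hmn : m ≤ n) :
    ∑ μ ∈ Finset.Icc (1:ℤ) n, f μ
      = (∑ μ ∈ Finset.Icc (1:ℤ) m, f μ) + ∑ μ ∈ Finset.Icc (m+1) n, f μ := by
  rw [← Finset.sum_union]
  · congr 1
    ext x; simp only [Finset.mem_union, Finset.mem_Icc]; omega
  · rw [Finset.disjoint_left]
    intro x hx hx'
    simp only [Finset.mem_Icc] at hx hx'
    omega

/-- The key counting lemma: row-counting of the region kν < hμ. -/
lemma counting (h k : ℤ) (hh : 0 < h) (hk : 0 < k) (hco : IsCoprime h k) :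
    2 * (∑ μ ∈ Finset.Icc (1:ℤ) (k-1), μ * (h * μ / k))
      + ∑ ν ∈ Finset.Icc (1:ℤ) (h-1), ((k * ν / h)^2 + (k * ν / h)) = (h-1) * (k-1) * k := by
  have step1 : ∀ μ ∈ Finset.Icc (1:ℤ) (k-1),
      μ * (h * μ / k) = ∑ ν ∈ Finset.Icc (1:ℤ) (h-1), (if k * ν < h * μ then μ else 0) := by
    intro μ hμ
    have hμ' := Finset.mem_Icc.mp hμ
    have hq0 : 0 ≤ h * μ / k := Int.ediv_nonneg (by nlinarith) (by omega)
    have hqh : h * μ / k ≤ h - 1 := by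
      have : h * μ / k < h := (Int.ediv_lt_iff_lt_mul hk).mpr (by nlinarith)
      omega
    have hfil : Finset.filter (fun ν => k * ν < h * μ) (Finset.Icc (1:ℤ) (h-1))
        = Finset.Icc (1:ℤ) (h * μ / k) := by
      ext ν
      simp only [Finset.mem_filter, Finset.mem_Icc]
      constructor
      · rintro ⟨⟨h1, h2⟩, h3⟩
        have hcomm : ν * k = k * ν := mul_comm ν k
        refine ⟨h1, (Int.le_ediv_iff_mul_le hk).mpr (by omega)⟩
      · rintro ⟨h1, h2⟩
        have hcomm : ν * k = k * ν := mul_comm ν k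
        have hle : ν * k ≤ h * μ := (Int.le_ediv_iff_mul_le hk).mp h2
        have hne : ν * k ≠ h * μ := by
          intro he
          exact not_dvd_of_mem hk hco hμ ⟨ν, by linarith⟩
        exact ⟨⟨h1, by omega⟩, by omega⟩
    rw [← Finset.sum_filter, hfil, Finset.sum_const, Int.card_Icc, nsmul_eq_mul]
    rw [Int.toNat_of_nonneg (by omega)]
    ring
  rw [Finset.sum_congr rfl step1, Finset.sum_comm]
  have step3 : ∀ ν ∈ Finset.Icc (1:ℤ) (h-1),
      ∑ μ ∈ Finset.Icc (1:ℤ) (k-1), (if k * ν < h * μ then μ else 0)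
        = (∑ μ ∈ Finset.Icc (1:ℤ) (k-1), μ) - ∑ μ ∈ Finset.Icc (1:ℤ) (k * ν / h), μ := by
    intro ν hν
    have hν' := Finset.mem_Icc.mp hν
    have hm0 : 0 ≤ k * ν / h := Int.ediv_nonneg (by nlinarith) (by omega)
    have hmk : k * ν / h ≤ k - 1 := by
      have : k * ν / h < k := (Int.ediv_lt_iff_lt_mul hh).mpr (by nlinarith)
      omega
    have hfil : Finset.filter (fun μ => k * ν < h * μ) (Finset.Icc (1:ℤ) (k-1))
        = Finset.Icc (k * ν / h + 1) (k-1) := by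
      ext μ
      simp only [Finset.mem_filter, Finset.mem_Icc]
      constructor
      · rintro ⟨⟨h1, h2⟩, h3⟩
        have hcomm : μ * h = h * μ := mul_comm μ h
        have : ¬ (μ ≤ k * ν / h) := by
          intro hle
          have := (Int.le_ediv_iff_mul_le hh).mp hle
          omega
        exact ⟨by omega, h2⟩
      · rintro ⟨h1, h2⟩
        have hcomm : μ * h = h * μ := mul_comm μ h
        have : ¬ (μ * h ≤ k * ν) := by
          intro hle
          have := (Int.le_ediv_iff_mul_le hh).mpr hle
          omega
        exact ⟨⟨by omega, h2⟩, by omega⟩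
    rw [← Finset.sum_filter, hfil,
      sum_Icc_split (fun μ => μ) (k * ν / h) (k-1) hm0 hmk]
    ring
  rw [Finset.sum_congr rfl step3]
  have expand : ∀ ν ∈ Finset.Icc (1:ℤ) (h-1),
      2 * ((∑ μ ∈ Finset.Icc (1:ℤ) (k-1), μ) - ∑ μ ∈ Finset.Icc (1:ℤ) (k * ν / h), μ)
        + ((k * ν / h)^2 + (k * ν / h)) = (k-1) * k := by
    intro ν hν
    have hν' := Finset.mem_Icc.mp hν
    have hm0 : 0 ≤ k * ν / h := Int.ediv_nonneg (by nlinarith) (by omega)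
    have e1 := sum_Icc_id (k-1) (by omega)
    have e2 := sum_Icc_id (k * ν / h) hm0
    ring_nf
    ring_nf at e1 e2
    linarith
  calc 2 * (∑ ν ∈ Finset.Icc (1:ℤ) (h-1),
        ((∑ μ ∈ Finset.Icc (1:ℤ) (k-1), μ) - ∑ μ ∈ Finset.Icc (1:ℤ) (k * ν / h), μ))
      + ∑ ν ∈ Finset.Icc (1:ℤ) (h-1), ((k * ν / h)^2 + (k * ν / h))
      = ∑ ν ∈ Finset.Icc (1:ℤ) (h-1),
        (2 * ((∑ μ ∈ Finset.Icc (1:ℤ) (k-1), μ) - ∑ μ ∈ Finset.Icc (1:ℤ) (k * ν / h), μ)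
          + ((k * ν / h)^2 + (k * ν / h))) := by
        simp only [Finset.sum_add_distrib, Finset.mul_sum]
    _ = ∑ ν ∈ Finset.Icc (1:ℤ) (h-1), ((k-1) * k) := Finset.sum_congr rfl expand
    _ = (h-1) * (k-1) * k := by
        rw [Finset.sum_const, Int.card_Icc, nsmul_eq_mul, Int.toNat_of_nonneg (by omega)]
        ring

lemma saw_div_eq {r k : ℤ} (hk : 0 < k) (h1 : 1 ≤ r) (h2 : r ≤ k - 1) :
    saw ((r : ℝ) / k) = (r : ℝ) / k - 1/2 := by
  have hkR : (0:ℝ) < k := by exact_mod_cast hk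
  have hfr : Int.fract ((r:ℝ)/k) = (r:ℝ)/k := by
    rw [Int.fract_eq_self]
    constructor
    · positivity
    · rw [div_lt_one hkR]; exact_mod_cast (by omega : r < k)
  unfold saw
  rw [hfr, if_neg]
  positivity

lemma saw_mul_div_eq {h k μ : ℤ} (hk : 0 < k) (hco : IsCoprime h k)
    (hμ : μ ∈ Finset.Icc (1:ℤ) (k-1)) :
    saw ((h : ℝ) * μ / k) = ((h * μ % k : ℤ) : ℝ) / k - 1/2 := by
  have hkR : (k:ℝ) ≠ 0 := by exact_mod_cast (by omega : k ≠ 0)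
  have hmem := emod_mem hk hco hμ
  have hr := Finset.mem_Icc.mp hmem
  have key : (h : ℝ) * μ / k = ((h * μ % k : ℤ) : ℝ) / k + ((h * μ / k : ℤ) : ℝ) := by
    have hd : ((h * μ % k : ℤ) : ℝ) = (h:ℝ) * μ - k * ((h * μ / k : ℤ) : ℝ) := by
      exact_mod_cast congrArg (Int.cast : ℤ → ℝ) (Int.emod_def (h*μ) k)
    rw [hd]; field_simp; ring
  rw [key, saw_add_int, saw_div_eq hk hr.1 hr.2]

lemma dedekind_eq (h k : ℤ) (hk : 0 < k) (hco : IsCoprime h k) :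
    dedekindSum h k
      = ((∑ μ ∈ Finset.Icc (1:ℤ) (k-1), (2*(h*μ % k) - k) * (2*μ - k) : ℤ) : ℝ) / (4 * (k:ℝ)^2) := by
  have hkR : (k:ℝ) ≠ 0 := by exact_mod_cast (by omega : k ≠ 0)
  unfold dedekindSum
  have hsplit : Finset.Icc (1:ℤ) k = insert k (Finset.Icc (1:ℤ) (k-1)) := by
    ext x; simp only [Finset.mem_Icc, Finset.mem_insert]; omega
  rw [hsplit, Finset.sum_insert (by simp)]
  have htop : saw ((k:ℝ)/k) = 0 := by
    rw [div_self hkR, saw_one]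
  rw [htop, mul_zero, zero_add]
  have hterm : ∀ μ ∈ Finset.Icc (1:ℤ) (k-1),
      saw ((h : ℝ) * μ / k) * saw ((μ : ℝ) / k)
        = (((2*(h*μ % k) - k) * (2*μ - k) : ℤ) : ℝ) / (4 * (k:ℝ)^2) := by
    intro μ hμ
    have hμ' := Finset.mem_Icc.mp hμ
    rw [saw_mul_div_eq hk hco hμ, saw_div_eq hk hμ'.1 hμ'.2]
    push_cast
    field_simp
    ring
  rw [Finset.sum_congr rfl hterm, ← Finset.sum_div]
  rw [← Int.cast_sum]

theorem dedekind_reciprocity (h k : ℤ) (hh : 0 < h) (hk : 0 < k) (hco : IsCoprime h k) :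
    dedekindSum h k + dedekindSum k h
      = -1/4 + ((h:ℝ)^2 + (k:ℝ)^2 + 1) / (12 * h * k) := by
  rw [dedekind_eq h k hk hco, dedekind_eq k h hh hco.symm]
  set SI1 := ∑ μ ∈ Finset.Icc (1:ℤ) (k-1), μ with hSI1
  set SI2 := ∑ μ ∈ Finset.Icc (1:ℤ) (k-1), μ^2 with hSI2
  set SJ1 := ∑ ν ∈ Finset.Icc (1:ℤ) (h-1), ν with hSJ1
  set SJ2 := ∑ ν ∈ Finset.Icc (1:ℤ) (h-1), ν^2 with hSJ2
  set D := ∑ μ ∈ Finset.Icc (1:ℤ) (k-1), μ * (h * μ / k) with hD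
  set M1 := ∑ ν ∈ Finset.Icc (1:ℤ) (h-1), ν * (k * ν / h) with hM1
  set M2 := ∑ ν ∈ Finset.Icc (1:ℤ) (h-1), (k * ν / h)^2 with hM2
  set M0 := ∑ ν ∈ Finset.Icc (1:ℤ) (h-1), (k * ν / h) with hM0
  have FX : (∑ μ ∈ Finset.Icc (1:ℤ) (k-1), (2*(h*μ % k) - k) * (2*μ - k))
      = 4*h*SI2 - 4*k*D - 4*k*SI1 + k^2*(k-1) := by
    have e1 : ∑ μ ∈ Finset.Icc (1:ℤ) (k-1), (h*μ % k) = SI1 := by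
      rw [hSI1]; exact sum_emod_bij h k hk hco (fun x => x)
    have e2' : ∑ μ ∈ Finset.Icc (1:ℤ) (k-1), μ * (h*μ % k) = h*SI2 - k*D := by
      have t : ∀ μ ∈ Finset.Icc (1:ℤ) (k-1),
          μ * (h*μ % k) = h*μ^2 - k*(μ * (h*μ/k)) := by
        intro μ _; rw [Int.emod_def]; ring
      rw [Finset.sum_congr rfl t, Finset.sum_sub_distrib, ← Finset.mul_sum, ← Finset.mul_sum,
        ← hSI2, ← hD]
    have e3 : ∀ μ ∈ Finset.Icc (1:ℤ) (k-1),
        (2*(h*μ % k) - k) * (2*μ - k)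
          = 4*(μ * (h*μ % k)) + (-2*k)*(h*μ % k) + (-2*k)*μ + k^2 := by
      intro μ _; ring
    rw [Finset.sum_congr rfl e3, Finset.sum_add_distrib, Finset.sum_add_distrib,
      Finset.sum_add_distrib, ← Finset.mul_sum, ← Finset.mul_sum, ← Finset.mul_sum,
      Finset.sum_const, Int.card_Icc, nsmul_eq_mul,
      Int.toNat_of_nonneg (by omega : (0:ℤ) ≤ k - 1 + 1 - 1), e2', e1, ← hSI1]
    ring
  have FY : (∑ ν ∈ Finset.Icc (1:ℤ) (h-1), (2*(k*ν % h) - h) * (2*ν - h))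
      = 4*k*SJ2 - 4*h*M1 - 4*h*SJ1 + h^2*(h-1) := by
    have e1 : ∑ ν ∈ Finset.Icc (1:ℤ) (h-1), (k*ν % h) = SJ1 := by
      rw [hSJ1]; exact sum_emod_bij k h hh hco.symm (fun x => x)
    have e2' : ∑ ν ∈ Finset.Icc (1:ℤ) (h-1), ν * (k*ν % h) = k*SJ2 - h*M1 := by
      have t : ∀ ν ∈ Finset.Icc (1:ℤ) (h-1),
          ν * (k*ν % h) = k*ν^2 - h*(ν * (k*ν/h)) := by
        intro ν _; rw [Int.emod_def]; ring
      rw [Finset.sum_congr rfl t, Finset.sum_sub_distrib, ← Finset.mul_sum, ← Finset.mul_sum,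
        ← hSJ2, ← hM1]
    have e3 : ∀ ν ∈ Finset.Icc (1:ℤ) (h-1),
        (2*(k*ν % h) - h) * (2*ν - h)
          = 4*(ν * (k*ν % h)) + (-2*h)*(k*ν % h) + (-2*h)*ν + h^2 := by
      intro ν _; ring
    rw [Finset.sum_congr rfl e3, Finset.sum_add_distrib, Finset.sum_add_distrib,
      Finset.sum_add_distrib, ← Finset.mul_sum, ← Finset.mul_sum, ← Finset.mul_sum,
      Finset.sum_const, Int.card_Icc, nsmul_eq_mul,
      Int.toNat_of_nonneg (by omega : (0:ℤ) ≤ h - 1 + 1 - 1), e2', e1, ← hSJ1]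
    ring
  have F1 : 2 * SI1 = (k-1) * k := by
    have t := sum_Icc_id (k-1) (by omega); rw [← hSI1] at t; linear_combination t
  have F2 : 6 * SI2 = (k-1) * k * (2*(k-1)+1) := by
    have t := sum_Icc_sq (k-1) (by omega); rw [← hSI2] at t; linear_combination t
  have F3 : 2 * SJ1 = (h-1) * h := by
    have t := sum_Icc_id (h-1) (by omega); rw [← hSJ1] at t; linear_combination t
  have F4 : 6 * SJ2 = (h-1) * h * (2*(h-1)+1) := by
    have t := sum_Icc_sq (h-1) (by omega); rw [← hSJ2] at t; linear_combination t
  have F6 : k^2*SJ2 - 2*k*h*M1 + h^2*M2 = SJ2 := by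
    have e1 := sum_emod_bij k h hh hco.symm (fun x => x^2)
    have e2 : ∀ ν ∈ Finset.Icc (1:ℤ) (h-1),
        (k*ν % h)^2 = k^2*ν^2 + (-2*k*h)*(ν * (k*ν/h)) + h^2*(k*ν/h)^2 := by
      intro ν _; rw [Int.emod_def]; ring
    rw [Finset.sum_congr rfl e2, Finset.sum_add_distrib, Finset.sum_add_distrib,
      ← Finset.mul_sum, ← Finset.mul_sum, ← Finset.mul_sum, ← hSJ2, ← hM1, ← hM2] at e1
    linear_combination e1
  have F7 : 2*D + M2 + M0 = (h-1)*(k-1)*k := by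
    have t := counting h k hh hk hco
    rw [Finset.sum_add_distrib, ← hD, ← hM2, ← hM0] at t
    linear_combination t
  have F8 : h * M0 = k * SJ1 - SJ1 := by
    have e1 := sum_emod_bij k h hh hco.symm (fun x => x)
    have e2 : ∀ ν ∈ Finset.Icc (1:ℤ) (h-1), (k*ν % h) = k*ν - h*(k*ν/h) := by
      intro ν _; rw [Int.emod_def]
    rw [Finset.sum_congr rfl e2, Finset.sum_sub_distrib, ← Finset.mul_sum, ← Finset.mul_sum,
      ← hSJ1, ← hM0] at e1
    linear_combination -e1
  have G : 3*h^2*(4*h*SI2 - 4*k*D - 4*k*SI1 + k^2*(k-1))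
        + 3*k^2*(4*k*SJ2 - 4*h*M1 - 4*h*SJ1 + h^2*(h-1))
      = h*k*(h^2 + k^2 + 1 - 3*h*k) := by
    linear_combination (-6*h^2*k) * F1 + (2*h^3) * F2 + (-3*h*k^2 - 3*h*k) * F3
      + (k^3 + k) * F4 + (6*k) * F6 + (-6*h^2*k) * F7 + (6*h*k) * F8
  rw [FX, FY]
  have GR : (3:ℝ)*(h:ℝ)^2*((4*h*SI2 - 4*k*D - 4*k*SI1 + k^2*(k-1) : ℤ) : ℝ)
        + 3*(k:ℝ)^2*((4*k*SJ2 - 4*h*M1 - 4*h*SJ1 + h^2*(h-1) : ℤ) : ℝ)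
      = (h:ℝ)*(k:ℝ)*((h:ℝ)^2 + (k:ℝ)^2 + 1 - 3*(h:ℝ)*(k:ℝ)) := by
    exact_mod_cast congrArg (Int.cast : ℤ → ℝ) G
  have hhR : (h:ℝ) ≠ 0 := by exact_mod_cast (by omega : h ≠ 0)
  have hkR : (k:ℝ) ≠ 0 := by exact_mod_cast (by omega : k ≠ 0)
  set XR : ℝ := ((4*h*SI2 - 4*k*D - 4*k*SI1 + k^2*(k-1) : ℤ) : ℝ) with hXR
  set YR : ℝ := ((4*k*SJ2 - 4*h*M1 - 4*h*SJ1 + h^2*(h-1) : ℤ) : ℝ) with hYR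
  calc XR / (4*(k:ℝ)^2) + YR / (4*(h:ℝ)^2)
      = (3*(h:ℝ)^2*XR + 3*(k:ℝ)^2*YR) / (12*(h:ℝ)^2*(k:ℝ)^2) := by
        field_simp
        ring
    _ = ((h:ℝ)*(k:ℝ)*((h:ℝ)^2 + (k:ℝ)^2 + 1 - 3*(h:ℝ)*(k:ℝ))) / (12*(h:ℝ)^2*(k:ℝ)^2) := by
        rw [GR]
    _ = -1/4 + ((h:ℝ)^2 + (k:ℝ)^2 + 1) / (12 * (h:ℝ) * (k:ℝ)) := by
        field_simp
        ring

lemma dedekindSum_zero_left (k : ℤ) : dedekindSum 0 k = 0 := by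
  unfold dedekindSum
  apply Finset.sum_eq_zero
  intro μ _
  norm_num [saw_zero]

lemma dedekindSum_neg_left (h k : ℤ) : dedekindSum (-h) k = - dedekindSum h k := by
  unfold dedekindSum
  rw [← Finset.sum_neg_distrib]
  apply Finset.sum_congr rfl
  intro μ _
  have : ((-h : ℤ) : ℝ) * μ / k = -((h:ℝ) * μ / k) := by push_cast; ring
  rw [this, saw_neg]
  ring

lemma dedekindSum_period (h k t : ℤ) (hk : k ≠ 0) :
    dedekindSum (h + t * k) k = dedekindSum h k := by
  unfold dedekindSum
  apply Finset.sum_congr rfl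
  intro μ _
  have hkR : (k:ℝ) ≠ 0 := by exact_mod_cast hk
  have : ((h + t * k : ℤ) : ℝ) * μ / k = (h:ℝ) * μ / k + ((t * μ : ℤ) : ℝ) := by
    push_cast; field_simp
  rw [this, saw_add_int]

lemma sign_add_eq (x y : ℤ) : x.sign + y.sign = (1 + (x*y).sign) * (x+y).sign := by
  rcases lt_trichotomy x 0 with hx|hx|hx <;> rcases lt_trichotomy y 0 with hy|hy|hy
  · rw [Int.sign_eq_neg_one_of_neg hx, Int.sign_eq_neg_one_of_neg hy,
      Int.sign_eq_one_of_pos (mul_pos_of_neg_of_neg hx hy),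
      Int.sign_eq_neg_one_of_neg (by omega)]
    ring
  · subst hy; simp
  · rw [Int.sign_eq_neg_one_of_neg hx, Int.sign_eq_one_of_pos hy,
      Int.sign_eq_neg_one_of_neg (mul_neg_of_neg_of_pos hx hy)]
    ring
  · subst hx; simp
  · subst hx; simp
  · subst hx; simp
  · rw [Int.sign_eq_one_of_pos hx, Int.sign_eq_neg_one_of_neg hy,
      Int.sign_eq_neg_one_of_neg (mul_neg_of_pos_of_neg hx hy)]
    ring
  · subst hy; simp
  · rw [Int.sign_eq_one_of_pos hx, Int.sign_eq_one_of_pos hy,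
      Int.sign_eq_one_of_pos (mul_pos hx hy),
      Int.sign_eq_one_of_pos (by omega)]
    ring

lemma sign_lemma_L (c1 d1 a c c3 : ℤ) (h3 : c3 = d1*a - c1*c)
    (h1 : ¬(c1 = 0 ∧ d1 = 0)) (h2 : ¬(a = 0 ∧ c = 0)) :
    (c1*d1).sign + (d1*c*c3).sign = (a*c).sign + (c1*a*c3).sign := by
  by_cases hd1 : d1 = 0
  · subst hd1
    have hc1 : c1 ≠ 0 := fun h => h1 ⟨h, rfl⟩
    have e : c1*a*c3 = -(c1^2*(a*c)) := by rw [h3]; ring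
    rw [e]
    simp only [Int.sign_neg, Int.sign_mul, Int.sign_zero, mul_zero, zero_mul,
      Int.sign_eq_one_of_pos (show (0:ℤ) < c1^2 by positivity), one_mul]
    omega
  by_cases hc : c = 0
  · subst hc
    have ha : a ≠ 0 := fun h => h2 ⟨h, rfl⟩
    have e : c1*a*c3 = a^2*(c1*d1) := by rw [h3]; ring
    rw [e]
    simp only [Int.sign_neg, Int.sign_mul, Int.sign_zero, mul_zero, zero_mul,
      Int.sign_eq_one_of_pos (show (0:ℤ) < a^2 by positivity), one_mul]
    omega
  · have harg : d1*a + -(c1*c) = c3 := by rw [h3]; ring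
    have key := sign_add_eq (d1*a) (-(c1*c))
    rw [harg] at key
    simp only [Int.sign_mul, Int.sign_neg] at key ⊢
    rcases lt_trichotomy d1 0 with h|h|h
    · rcases lt_trichotomy c 0 with h'|h'|h'
      · rw [Int.sign_eq_neg_one_of_neg h, Int.sign_eq_neg_one_of_neg h'] at key ⊢
        linear_combination -key
      · exact absurd h' hc
      · rw [Int.sign_eq_neg_one_of_neg h, Int.sign_eq_one_of_pos h'] at key ⊢
        linear_combination key
    · exact absurd h hd1
    · rcases lt_trichotomy c 0 with h'|h'|h'
      · rw [Int.sign_eq_one_of_pos h, Int.sign_eq_neg_one_of_neg h'] at key ⊢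
        linear_combination key
      · exact absurd h' hc
      · rw [Int.sign_eq_one_of_pos h, Int.sign_eq_one_of_pos h'] at key ⊢
        linear_combination -key

def Tq (n : ℤ) : Matrix (Fin 2) (Fin 2) ℤ := !![1, n; 0, 1]

def Smat : Matrix (Fin 2) (Fin 2) ℤ := !![0, -1; 1, 0]

lemma mul_apply2 (A B : Matrix (Fin 2) (Fin 2) ℤ) (i j : Fin 2) :
    (A * B) i j = A i 0 * B 0 j + A i 1 * B 1 j := by
  rw [Matrix.mul_apply, Fin.sum_univ_two]

@[simp] lemma Tq00 (n : ℤ) : Tq n 0 0 = 1 := rfl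
@[simp] lemma Tq01 (n : ℤ) : Tq n 0 1 = n := rfl
@[simp] lemma Tq10 (n : ℤ) : Tq n 1 0 = 0 := rfl
@[simp] lemma Tq11 (n : ℤ) : Tq n 1 1 = 1 := rfl
@[simp] lemma S00 : Smat 0 0 = 0 := rfl
@[simp] lemma S01 : Smat 0 1 = -1 := rfl
@[simp] lemma S10 : Smat 1 0 = 1 := rfl
@[simp] lemma S11 : Smat 1 1 = 0 := rfl

lemma Tq_det (n : ℤ) : (Tq n).det = 1 := by
  rw [Matrix.det_fin_two]; simp

lemma Smat_det : Smat.det = 1 := by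
  rw [Matrix.det_fin_two]; simp

lemma Rad_Tq (n : ℤ) : Rad (Tq n) = n := by
  unfold Rad
  rw [if_pos (Tq10 n), Tq01, Tq11]
  norm_num

lemma Rad_S : Rad Smat = 0 := by
  unfold Rad
  rw [if_neg (by rw [S10]; omega), S00, S10, S11]
  rw [dedekindSum_zero_left]
  norm_num

lemma Rad_neg (γ : Matrix (Fin 2) (Fin 2) ℤ) : Rad (-γ) = Rad γ := by
  unfold Rad
  by_cases hc : γ 1 0 = 0
  · rw [if_pos hc, if_pos (by simp [Matrix.neg_apply, hc])]
    simp only [Matrix.neg_apply]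
    push_cast
    rw [neg_div_neg_eq]
  · rw [if_neg hc, if_neg (by simp [Matrix.neg_apply, hc])]
    simp only [Matrix.neg_apply]
    rw [abs_neg, Int.sign_neg,
      show -γ 1 1 = -(γ 1 1) from rfl, dedekindSum_neg_left]
    push_cast
    rw [div_neg]
    ring
lemma entry_mul_T (γ : Matrix (Fin 2) (Fin 2) ℤ) (n : ℤ) :
    (γ * Tq n) 1 0 = γ 1 0 := by
  rw [mul_apply2]; simp

lemma Rad_mul_T (γ : Matrix (Fin 2) (Fin 2) ℤ) (hdet : γ.det = 1) (n : ℤ) :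
    Rad (γ * Tq n) = Rad γ + n := by
  rw [Matrix.det_fin_two] at hdet
  have E00 : (γ * Tq n) 0 0 = γ 0 0 := by rw [mul_apply2]; simp
  have E01 : (γ * Tq n) 0 1 = γ 0 0 * n + γ 0 1 := by rw [mul_apply2]; simp
  have E10 : (γ * Tq n) 1 0 = γ 1 0 := entry_mul_T γ n
  have E11 : (γ * Tq n) 1 1 = γ 1 0 * n + γ 1 1 := by rw [mul_apply2]; simp
  unfold Rad
  by_cases hc : γ 1 0 = 0
  · rw [if_pos (by rw [E10]; exact hc), if_pos hc, E01, E11, hc]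
    have had : γ 0 0 * γ 1 1 = 1 := by rw [hc] at hdet; linarith
    rcases Int.eq_one_or_neg_one_of_mul_eq_one' had with ⟨ha, hd⟩ | ⟨ha, hd⟩ <;>
      rw [ha, hd] <;> push_cast <;> ring
  · rw [if_neg (by rw [E10]; exact hc), if_neg hc, E00, E10, E11]
    have hper : dedekindSum (γ 1 0 * n + γ 1 1) |γ 1 0| = dedekindSum (γ 1 1) |γ 1 0| := by
      rcases lt_trichotomy (γ 1 0) 0 with h|h|h
      · rw [abs_of_neg h]
        rw [show γ 1 0 * n + γ 1 1 = γ 1 1 + (-n) * (-(γ 1 0)) by ring]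
        exact dedekindSum_period (γ 1 1) (-(γ 1 0)) (-n) (by omega)
      · exact absurd h hc
      · rw [abs_of_pos h]
        rw [show γ 1 0 * n + γ 1 1 = γ 1 1 + n * γ 1 0 by ring]
        exact dedekindSum_period (γ 1 1) (γ 1 0) n (by omega)
    rw [hper]
    have hcR : (γ 1 0 : ℝ) ≠ 0 := by exact_mod_cast hc
    push_cast
    field_simp
    ring

lemma dedekindSum_neg_left' (h k : ℤ) : dedekindSum h k = - dedekindSum (-h) k := by
  have t := dedekindSum_neg_left (-h) k
  rw [neg_neg] at t
  rw [t]

lemma Rad_mul_S (γ : Matrix (Fin 2) (Fin 2) ℤ) (hdet : γ.det = 1) :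
    Rad (γ * Smat) = Rad γ - 3 * (((γ 1 0) * (γ 1 1)).sign : ℝ) := by
  rw [Matrix.det_fin_two] at hdet
  have E00 : (γ * Smat) 0 0 = γ 0 1 := by rw [mul_apply2]; simp
  have E01 : (γ * Smat) 0 1 = -(γ 0 0) := by rw [mul_apply2]; simp
  have E10 : (γ * Smat) 1 0 = γ 1 1 := by rw [mul_apply2]; simp
  have E11 : (γ * Smat) 1 1 = -(γ 1 0) := by rw [mul_apply2]; simp
  unfold Rad
  rw [E00, E01, E10, E11]
  set a := γ 0 0 with ha
  set b := γ 0 1 with hb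
  set c := γ 1 0 with hc0
  set d := γ 1 1 with hd0
  by_cases hd : d = 0
  · have hcn : c ≠ 0 := by rintro h0; rw [hd, h0] at hdet; simp at hdet
    rw [if_pos hd, if_neg hcn, hd]
    rw [dedekindSum_zero_left]
    have hcR : (c : ℝ) ≠ 0 := by exact_mod_cast hcn
    push_cast
    rw [neg_div_neg_eq]
    simp
  · rw [if_neg hd]
    by_cases hc : c = 0
    · rw [if_pos hc, hc]
      have had : a * d = 1 := by rw [hc] at hdet; linarith
      rw [show (-(0:ℤ)) = 0 by ring, dedekindSum_zero_left]
      norm_num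
    · rw [if_neg hc]
      -- main case : c ≠ 0, d ≠ 0
      have hcop : IsCoprime c d := ⟨-(γ 0 1), γ 0 0, by linarith⟩
      have hcR : (c : ℝ) ≠ 0 := by exact_mod_cast hc
      have hdR : (d : ℝ) ≠ 0 := by exact_mod_cast hd
      have hdetR : (a:ℝ) * d - b * c = 1 := by exact_mod_cast hdet
      rcases lt_trichotomy c 0 with hcs|hcs|hcs
      · rcases lt_trichotomy d 0 with hds|hds|hds
        · -- c < 0, d < 0
          rw [abs_of_neg hcs, abs_of_neg hds, Int.sign_eq_neg_one_of_neg hcs,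
            Int.sign_eq_neg_one_of_neg hds,
            Int.sign_eq_one_of_pos (mul_pos_of_neg_of_neg hcs hds),
            dedekindSum_neg_left' d (-c)]
          have recip := dedekind_reciprocity (-c) (-d) (by omega) (by omega)
            (hcop.neg_left.neg_right)
          have recip' : 12*(c:ℝ)*(d:ℝ)*(dedekindSum (-c) (-d) + dedekindSum (-d) (-c))
              = -3*(c:ℝ)*(d:ℝ) + ((c:ℝ)^2 + (d:ℝ)^2 + 1) := by
            rw [recip]
            push_cast
            field_simp
            ring
          push_cast
          field_simp
          linear_combination recip' - hdetR
        · exact absurd hds hd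
        · -- c < 0, d > 0
          rw [abs_of_neg hcs, abs_of_pos hds, Int.sign_eq_neg_one_of_neg hcs,
            Int.sign_eq_one_of_pos hds,
            Int.sign_eq_neg_one_of_neg (mul_neg_of_neg_of_pos hcs hds)]
          have recip := dedekind_reciprocity (-c) d (by omega) (by omega) hcop.neg_left
          have recip' : 12*(c:ℝ)*(d:ℝ)*(dedekindSum (-c) d + dedekindSum d (-c))
              = -3*(c:ℝ)*(d:ℝ) - ((c:ℝ)^2 + (d:ℝ)^2 + 1) := by
            rw [recip]
            push_cast
            field_simp
            ring
          push_cast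
          field_simp
          linear_combination -recip' - hdetR
      · exact absurd hcs hc
      · rcases lt_trichotomy d 0 with hds|hds|hds
        · -- c > 0, d < 0
          rw [abs_of_pos hcs, abs_of_neg hds, Int.sign_eq_one_of_pos hcs,
            Int.sign_eq_neg_one_of_neg hds,
            Int.sign_eq_neg_one_of_neg (mul_neg_of_pos_of_neg hcs hds),
            dedekindSum_neg_left c (-d), dedekindSum_neg_left' d c]
          have recip := dedekind_reciprocity c (-d) (by omega) (by omega) hcop.neg_right
          have recip' : 12*(c:ℝ)*(d:ℝ)*(dedekindSum c (-d) + dedekindSum (-d) c)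
              = -3*(c:ℝ)*(d:ℝ) - ((c:ℝ)^2 + (d:ℝ)^2 + 1) := by
            rw [recip]
            push_cast
            field_simp
            ring
          push_cast
          field_simp
          linear_combination -recip' - hdetR
        · exact absurd hds hd
        · -- c > 0, d > 0
          rw [abs_of_pos hcs, abs_of_pos hds, Int.sign_eq_one_of_pos hcs,
            Int.sign_eq_one_of_pos hds,
            Int.sign_eq_one_of_pos (mul_pos hcs hds),
            dedekindSum_neg_left c d]
          have recip := dedekind_reciprocity c d (by omega) (by omega) hcop
          have recip' : 12*(c:ℝ)*(d:ℝ)*(dedekindSum c d + dedekindSum d c)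
              = -3*(c:ℝ)*(d:ℝ) + ((c:ℝ)^2 + (d:ℝ)^2 + 1) := by
            rw [recip]
            push_cast
            field_simp
            ring
          push_cast
          field_simp
          linear_combination recip' - hdetR

lemma T_step (w : Matrix (Fin 2) (Fin 2) ℤ) (n : ℤ)
    (hw : ∀ δ : Matrix (Fin 2) (Fin 2) ℤ, δ.det = 1 →
      Rad (δ * w) = Rad δ + Rad w - 3 * (((δ 1 0) * (w 1 0) * ((δ * w) 1 0)).sign : ℝ))
    (γ : Matrix (Fin 2) (Fin 2) ℤ) (hγ : γ.det = 1) :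
    Rad (γ * (Tq n * w)) = Rad γ + Rad (Tq n * w)
      - 3 * (((γ 1 0) * ((Tq n * w) 1 0) * ((γ * (Tq n * w)) 1 0)).sign : ℝ) := by
  have hγT : (γ * Tq n).det = 1 := by rw [Matrix.det_mul, hγ, Tq_det, one_mul]
  have hassoc : γ * (Tq n * w) = (γ * Tq n) * w := (mul_assoc γ (Tq n) w).symm
  have A := hw (γ * Tq n) hγT
  have B := hw (Tq n) (Tq_det n)
  have e1 : (γ * Tq n) 1 0 = γ 1 0 := entry_mul_T γ n
  have e2 : (Tq n * w) 1 0 = w 1 0 := by rw [mul_apply2]; simp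
  rw [Rad_Tq, Tq10, zero_mul, zero_mul, Int.sign_zero] at B
  rw [hassoc, A, e1, Rad_mul_T γ hγ n, e2, B]
  push_cast
  ring

lemma S_step (w : Matrix (Fin 2) (Fin 2) ℤ) (hwdet : w.det = 1)
    (hw : ∀ δ : Matrix (Fin 2) (Fin 2) ℤ, δ.det = 1 →
      Rad (δ * w) = Rad δ + Rad w - 3 * (((δ 1 0) * (w 1 0) * ((δ * w) 1 0)).sign : ℝ))
    (γ : Matrix (Fin 2) (Fin 2) ℤ) (hγ : γ.det = 1) :
    Rad (γ * (Smat * w)) = Rad γ + Rad (Smat * w)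
      - 3 * (((γ 1 0) * ((Smat * w) 1 0) * ((γ * (Smat * w)) 1 0)).sign : ℝ) := by
  have hγS : (γ * Smat).det = 1 := by rw [Matrix.det_mul, hγ, Smat_det, one_mul]
  have hassoc : γ * (Smat * w) = (γ * Smat) * w := (mul_assoc γ Smat w).symm
  have E10' : (γ * Smat) 1 0 = γ 1 1 := by rw [mul_apply2]; simp
  have E11' : (γ * Smat) 1 1 = -(γ 1 0) := by rw [mul_apply2]; simp
  have e4 : (Smat * w) 1 0 = w 0 0 := by rw [mul_apply2]; simp
  have e3 : ((γ * Smat) * w) 1 0 = γ 1 1 * w 0 0 - γ 1 0 * w 1 0 := by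
    rw [mul_apply2, E10', E11']; ring
  have A := hw (γ * Smat) hγS
  have C := hw Smat Smat_det
  rw [Rad_S, S10, e4, one_mul, zero_add] at C
  have h1 : ¬(γ 1 0 = 0 ∧ γ 1 1 = 0) := by
    rintro ⟨u, v⟩
    rw [Matrix.det_fin_two, u, v] at hγ
    simp at hγ
  have h2 : ¬(w 0 0 = 0 ∧ w 1 0 = 0) := by
    rintro ⟨u, v⟩
    rw [Matrix.det_fin_two, u, v] at hwdet
    simp at hwdet
  have L := sign_lemma_L (γ 1 0) (γ 1 1) (w 0 0) (w 1 0)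
    (γ 1 1 * w 0 0 - γ 1 0 * w 1 0) rfl h1 h2
  rw [mul_comm (w 0 0) (w 1 0)] at L
  have LR : (((γ 1 0 * γ 1 1).sign : ℤ) : ℝ)
        + (((γ 1 1 * w 1 0 * (γ 1 1 * w 0 0 - γ 1 0 * w 1 0)).sign : ℤ) : ℝ)
      = (((w 1 0 * w 0 0).sign : ℤ) : ℝ)
        + (((γ 1 0 * w 0 0 * (γ 1 1 * w 0 0 - γ 1 0 * w 1 0)).sign : ℤ) : ℝ) := by
    exact_mod_cast congrArg (Int.cast : ℤ → ℝ) L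
  rw [hassoc, A, E10', e3, Rad_mul_S γ hγ, C, e4]
  linarith [LR]

theorem rademacher_quasimorphism (γ₁ γ₂ : Matrix (Fin 2) (Fin 2) ℤ)
    (h₁ : γ₁.det = 1) (h₂ : γ₂.det = 1) :
    Rad (γ₁ * γ₂) = Rad γ₁ + Rad γ₂
      - 3 * ((γ₁ 1 0 * γ₂ 1 0 * (γ₁ * γ₂) 1 0).sign : ℝ) := by
  suffices H : ∀ N : ℕ, ∀ w : Matrix (Fin 2) (Fin 2) ℤ, w.det = 1 → (w 1 0).natAbs = N →
      ∀ γ : Matrix (Fin 2) (Fin 2) ℤ, γ.det = 1 →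
      Rad (γ * w) = Rad γ + Rad w - 3 * (((γ 1 0) * (w 1 0) * ((γ * w) 1 0)).sign : ℝ) by
    exact H (γ₂ 1 0).natAbs γ₂ h₂ rfl γ₁ h₁
  intro N
  induction N using Nat.strong_induction_on with
  | _ N IH =>
  intro w hwdet hN γ hγ
  by_cases hc : w 1 0 = 0
  · -- base case : w is ± a power of T
    have hd : w 0 0 * w 1 1 = 1 := by
      rw [Matrix.det_fin_two, hc] at hwdet; linarith
    rw [hc, mul_zero, zero_mul, Int.sign_zero]
    push_cast
    rw [mul_zero, sub_zero]
    rcases Int.eq_one_or_neg_one_of_mul_eq_one' hd with ⟨ha, hdd⟩ | ⟨ha, hdd⟩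
    · have hwT : w = Tq (w 0 1) := by
        ext i j
        fin_cases i <;> fin_cases j <;> simp [Tq, ha, hdd, hc]
      rw [hwT, Rad_mul_T γ hγ, Rad_Tq]
    · have hwT : w = -(Tq (-(w 0 1))) := by
        ext i j
        fin_cases i <;> fin_cases j <;> simp [Tq, ha, hdd, hc]
      rw [hwT, mul_neg, Rad_neg, Rad_neg, Rad_mul_T γ hγ, Rad_Tq]
  · -- inductive step : Euclidean descent
    have hdiv : w 1 0 * (w 0 0 / w 1 0) + w 0 0 % w 1 0 = w 0 0 :=
      Int.mul_ediv_add_emod (w 0 0) (w 1 0)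
    have hr0 : 0 ≤ w 0 0 % w 1 0 := Int.emod_nonneg _ hc
    have hrlt : w 0 0 % w 1 0 < |w 1 0| := Int.emod_lt_abs _ hc
    set w2 : Matrix (Fin 2) (Fin 2) ℤ :=
      !![w 1 0, w 1 1; -(w 0 0 % w 1 0), -(w 0 1 - (w 0 0 / w 1 0) * w 1 1)] with hw2
    have hdet' : w 0 0 * w 1 1 - w 0 1 * w 1 0 = 1 := by
      rw [Matrix.det_fin_two] at hwdet; exact hwdet
    have hw2det : w2.det = 1 := by
      rw [hw2, Matrix.det_fin_two]
      simp only [Matrix.cons_val', Matrix.cons_val_zero, Matrix.cons_val_one,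
        Matrix.head_cons, Matrix.head_fin_const, Matrix.empty_val',
        Matrix.cons_val_fin_one, Matrix.of_apply]
      linear_combination hdet' + (w 1 1) * hdiv
    have hent : w2 1 0 = -(w 0 0 % w 1 0) := by
      rw [hw2]
      simp
    have hlt : (w2 1 0).natAbs < N := by
      rw [hent]
      have habs : |w 1 0| = (w 1 0).natAbs := Int.abs_eq_natAbs _
      omega
    have hdecomp : w = Tq (w 0 0 / w 1 0) * (Smat * w2) := by
      ext i j
      fin_cases i <;> fin_cases j <;>
        simp [hw2, Tq, Smat, Matrix.mul_apply, Fin.sum_univ_two] <;>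
        linarith [hdiv]
    have h2 : ∀ δ : Matrix (Fin 2) (Fin 2) ℤ, δ.det = 1 →
        Rad (δ * w2) = Rad δ + Rad w2
          - 3 * (((δ 1 0) * (w2 1 0) * ((δ * w2) 1 0)).sign : ℝ) :=
      fun δ hδ => IH (w2 1 0).natAbs hlt w2 hw2det rfl δ hδ
    have h1 : ∀ δ : Matrix (Fin 2) (Fin 2) ℤ, δ.det = 1 →
        Rad (δ * (Smat * w2)) = Rad δ + Rad (Smat * w2)
          - 3 * (((δ 1 0) * ((Smat * w2) 1 0) * ((δ * (Smat * w2)) 1 0)).sign : ℝ) :=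
      fun δ hδ => S_step w2 hw2det h2 δ hδ
    have h0 := T_step (Smat * w2) (w 0 0 / w 1 0) h1 γ hγ
    rw [hdecomp]
    exact h0
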